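/- Sufficiency part of the sub-Nyquist radar recovery theorem (Theorem 1, on-grid form): let L ≥ 1, N ≥ 2L, P ≥ 1, and let F_κ be the 2L × N partial Fourier matrix with entries (F_κ)_{k,r} = exp(−2πi·k·r/N) for k ∈ {0,…,2L−1} and r ∈ {0,…,N−1}. If X and X′ are N × P complex matrices each having at most L nonzero entries in total, and F_κ · X = F_κ · X′, then X = X′. In particular, with P = 2L pulses and K = 2L Fourier coefficients per pulse, the K·P = 4L² measurements F_κ X uniquely determine any target scene of L on-grid targets. -/

import Mathlib

open Matrix

/-- Sufficiency part of Theorem 1 (on-grid form): with `K = 2L` consecutive Fourier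
coefficients per pulse, the measurements `F_κ X` uniquely determine any target scene
`X` with at most `L` nonzero entries. -/
theorem subNyquist_radar_sufficiency (L N P : ℕ) (hL : 1 ≤ L) (hN : 2 * L ≤ N) (hP : 1 ≤ P)
    (Fκ : Matrix (Fin (2 * L)) (Fin N) ℂ)
    (hF : ∀ (k : Fin (2 * L)) (r : Fin N),
      Fκ k r = Complex.exp (-(2 * Real.pi * Complex.I * (k.val : ℂ) * (r.val : ℂ)) / (N : ℂ)))
    (X X' : Matrix (Fin N) (Fin P) ℂ)
    (hX : {q : Fin N × Fin P | X q.1 q.2 ≠ 0}.ncard ≤ L)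
    (hX' : {q : Fin N × Fin P | X' q.1 q.2 ≠ 0}.ncard ≤ L)
    (h : Fκ * X = Fκ * X') : X = X' := by
  classical
  have hN0 : (N : ℂ) ≠ 0 := by
    have : 0 < N := lt_of_lt_of_le (by omega) hN
    exact_mod_cast this.ne'
  -- the nodes
  set z : Fin N → ℂ := fun r => Complex.exp (-(2 * Real.pi * Complex.I * (r.val : ℂ)) / (N : ℂ))
    with hz
  have hzinj : Function.Injective z := by
    intro a b hab
    obtain ⟨n, hn⟩ := Complex.exp_eq_exp_iff_exists_int.mp hab
    have h2 : (2 : ℂ) * Real.pi * Complex.I * N ≠ 0 := by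
      simp [Real.pi_ne_zero, Complex.I_ne_zero, hN0]
    have hba : (((b : ℕ) : ℂ) - ((a : ℕ) : ℂ)) = (n : ℂ) * N := by
      apply mul_left_cancel₀ h2
      field_simp at hn
      linear_combination (2 * (Real.pi : ℂ) * Complex.I * (N : ℂ)) * hn
    have hZ : (((b : ℕ) : ℤ) - ((a : ℕ) : ℤ)) = n * N := by exact_mod_cast hba
    have hNpos : 0 < (N : ℤ) := by exact_mod_cast lt_of_lt_of_le (show 0 < 2 * L by omega) hN
    have ha' : ((a : ℕ) : ℤ) < N := by exact_mod_cast a.isLt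
    have hb' : ((b : ℕ) : ℤ) < N := by exact_mod_cast b.isLt
    have ha0 : (0 : ℤ) ≤ ((a : ℕ) : ℤ) := Int.ofNat_nonneg _
    have hb0 : (0 : ℤ) ≤ ((b : ℕ) : ℤ) := Int.ofNat_nonneg _
    have hn0 : n = 0 := by
      by_contra hne
      rcases lt_or_gt_of_ne hne with hlt | hgt
      · have hle : n * N ≤ -1 * N :=
          mul_le_mul_of_nonneg_right (by omega) (le_of_lt hNpos)
        have : (((b : ℕ) : ℤ) - ((a : ℕ) : ℤ)) ≤ -N := by rw [hZ]; linarith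
        linarith
      · have hle : 1 * (N : ℤ) ≤ n * N :=
          mul_le_mul_of_nonneg_right (by omega) (le_of_lt hNpos)
        have : (N : ℤ) ≤ (((b : ℕ) : ℤ) - ((a : ℕ) : ℤ)) := by rw [hZ]; linarith
        linarith
    have : (a : ℕ) = (b : ℕ) := by rw [hn0] at hZ; omega
    exact Fin.ext this
  -- Fκ entries are powers of the nodes
  have hFz : ∀ (k : Fin (2 * L)) (r : Fin N), Fκ k r = z r ^ (k : ℕ) := by
    intro k r
    rw [hF, hz]
    rw [← Complex.exp_nat_mul]
    congr 1
    ring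
  -- the difference matrix
  set D : Matrix (Fin N) (Fin P) ℂ := X - X' with hD
  have hDsupp : (Prod.fst '' {q : Fin N × Fin P | D q.1 q.2 ≠ 0}).ncard ≤ 2 * L := by
    have hsub : {q : Fin N × Fin P | D q.1 q.2 ≠ 0}
        ⊆ {q : Fin N × Fin P | X q.1 q.2 ≠ 0} ∪ {q : Fin N × Fin P | X' q.1 q.2 ≠ 0} := by
      intro q hq
      by_contra hq'
      simp only [Set.mem_union, Set.mem_setOf_eq, not_or, not_not] at hq'
      exact hq (by simp [hD, hq'.1, hq'.2])
    calc (Prod.fst '' {q : Fin N × Fin P | D q.1 q.2 ≠ 0}).ncard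
        ≤ {q : Fin N × Fin P | D q.1 q.2 ≠ 0}.ncard := Set.ncard_image_le (Set.toFinite _)
      _ ≤ ({q : Fin N × Fin P | X q.1 q.2 ≠ 0} ∪ {q : Fin N × Fin P | X' q.1 q.2 ≠ 0}).ncard :=
          Set.ncard_le_ncard hsub (Set.toFinite _)
      _ ≤ _ + _ := Set.ncard_union_le _ _
      _ ≤ 2 * L := by omega
  set S : Finset (Fin N) := (Set.toFinite (Prod.fst '' {q : Fin N × Fin P | D q.1 q.2 ≠ 0})).toFinset
    with hS
  have hScard : S.card ≤ 2 * L := by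
    rwa [← Set.ncard_eq_toFinset_card _ (Set.toFinite _)]
  obtain ⟨T, hST, -, hTcard⟩ := Finset.exists_subsuperset_card_eq (Finset.subset_univ S) hScard
    (by simpa using hN)
  -- `r ∉ T` implies the whole row of `D` vanishes
  have hrow : ∀ (r : Fin N), r ∉ T → ∀ p, D r p = 0 := by
    intro r hr p
    by_contra hDrp
    exact hr (hST (by rw [hS, Set.Finite.mem_toFinset]; exact ⟨(r, p), hDrp, rfl⟩))
  have e : T ≃ Fin (2 * L) := T.equivFinOfCardEq hTcard
  have hfinj : Function.Injective (fun j : Fin (2 * L) => z ((e.symm j) : Fin N)) := by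
    intro i j hij
    have := hzinj hij
    have := Subtype.coe_injective this
    simpa using congrArg e (this)
  -- main argument, column by column
  have hDzero : D = 0 := by
    funext r p
    have hcol : ∀ k : Fin (2 * L), ∑ j : Fin (2 * L),
        D ((e.symm j) : Fin N) p * (fun j : Fin (2 * L) => z ((e.symm j) : Fin N)) j ^ (k : ℕ) = 0 := by
      intro k
      have hhp : ∑ s : Fin N, Fκ k s * D s p = 0 := by
        have hXX : ∑ s : Fin N, Fκ k s * X s p = ∑ s : Fin N, Fκ k s * X' s p := by
          rw [← Matrix.mul_apply, ← Matrix.mul_apply, h]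
        simp only [hD, Matrix.sub_apply, mul_sub, Finset.sum_sub_distrib, hXX, sub_self]
      have h1 : ∑ s ∈ T, z s ^ (k : ℕ) * D s p = 0 := by
        rw [← hhp]
        symm
        rw [← Finset.sum_subset (Finset.subset_univ T)]
        · exact Finset.sum_congr rfl fun s _ => by rw [hFz]
        · intro s _ hs
          rw [hrow s hs p, mul_zero]
      calc ∑ j : Fin (2 * L), D ((e.symm j) : Fin N) p * z ((e.symm j) : Fin N) ^ (k : ℕ)
          = ∑ s : T, D (s : Fin N) p * z (s : Fin N) ^ (k : ℕ) := (Equiv.sum_comp e.symm (fun s : T => D (s : Fin N) p * z (s : Fin N) ^ (k : ℕ)))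
        _ = ∑ s ∈ T, D s p * z s ^ (k : ℕ) := Finset.sum_coe_sort T (fun s => D s p * z s ^ (k : ℕ))
        _ = ∑ s ∈ T, z s ^ (k : ℕ) * D s p := by simp [mul_comm]
        _ = 0 := h1
    have hv := Matrix.eq_zero_of_forall_pow_sum_mul_pow_eq_zero hfinj hcol
    by_cases hrT : r ∈ T
    · have := congrFun hv (e ⟨r, hrT⟩)
      simpa using this
    · simpa using hrow r hrT p
  rw [← sub_eq_zero]
  exact hDzero
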